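/- The maximum over all three-module one-trit classical sequential processors of the correlation (1/64) · Σ_{x ∈ {0,1}^6} O(x) · T3(x) between the output O and the target function T3 equals 7/16 (i.e. 0.4375). -/
import Mathlib


/-- Domain of six input bits. -/
abbrev Bits6 := Fin 2 × Fin 2 × Fin 2 × Fin 2 × Fin 2 × Fin 2

/-- The 4×16 matrix defining the target function of the three-module single-qutrit
processor. -/
def M3 : Fin 4 → Fin 16 → ℤ :=
  ![![ 0,  0, -1,  1,  0,  0,  1, -1, -1,  1,  0,  0,  1, -1,  0,  0],
    ![ 0,  0,  1, -1,  0,  0, -1,  1,  1, -1,  0,  0, -1,  1,  0,  0],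
    ![-1,  1,  0,  0,  1, -1,  0,  0,  0,  0,  1, -1,  0,  0, -1,  1],
    ![ 1, -1,  0,  0, -1,  1,  0,  0,  0,  0, -1,  1,  0,  0,  1, -1]]

/-- Row index `2*X1 + X2`. -/
def row4 (x1 x2 : Fin 2) : Fin 4 := ⟨2 * x1.val + x2.val, by omega⟩

/-- Column index `8*X3 + 4*X4 + 2*X5 + X6`. -/
def col16 (x3 x4 x5 x6 : Fin 2) : Fin 16 :=
  ⟨8 * x3.val + 4 * x4.val + 2 * x5.val + x6.val, by omega⟩

/-- The target function `T3 : {0,1}^6 → {-1,0,1}`. -/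
def T3 : Bits6 → ℤ
  | (x1, x2, x3, x4, x5, x6) => M3 (row4 x1 x2) (col16 x3 x4 x5 x6)

/-- Output of a three-module one-trit classical sequential processor given by the
module strategies `g1`, `g2`, `g3`. -/
def output3trit (g1 : Fin 2 × Fin 2 → Fin 3) (g2 : Fin 3 → Fin 2 × Fin 2 → Fin 3)
    (g3 : Fin 3 → Fin 2 × Fin 2 → ℤ) : Bits6 → ℤ
  | (x1, x2, x3, x4, x5, x6) => g3 (g2 (g1 (x1, x2)) (x3, x4)) (x5, x6)

abbrev B4 := Bool × Bool × Bool × Bool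
def sg (b : Bool) : ℤ := cond b 1 (-1)
def b4get (t : B4) : Fin 2 × Fin 2 → Bool
  | (0,0) => t.1 | (0,1) => t.2.1 | (1,0) => t.2.2.1 | (1,1) => t.2.2.2
def sel3 (t0 t1 t2 : B4) : Fin 3 → B4
  | 0 => t0 | 1 => t1 | 2 => t2
def g3of (t0 t1 t2 : B4) : Fin 3 → Fin 2 × Fin 2 → ℤ :=
  fun s p => sg (b4get (sel3 t0 t1 t2 s) p)
def dd (g3 : Fin 3 → Fin 2 × Fin 2 → ℤ) (p q : Fin 2 × Fin 2) (s : Fin 3) : ℤ :=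
  ∑ p' : Fin 2 × Fin 2, g3 s p' * M3 (row4 p.1 p.2) (col16 q.1 q.2 p'.1 p'.2)
def max3 (f : Fin 3 → ℤ) : ℤ := max (f 0) (max (f 1) (f 2))
lemma le_max3 (f : Fin 3 → ℤ) (s : Fin 3) : f s ≤ max3 f := by
  fin_cases s
  · exact le_max_left _ _
  · exact le_trans (le_max_left _ _) (le_max_right _ _)
  · exact le_trans (le_max_right _ _) (le_max_right _ _)

def uOf (t : B4) : ℤ := sg t.1 - sg t.2.1
def vOf (t : B4) : ℤ := sg t.2.2.1 - sg t.2.2.2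
def dd2 (t : B4) (r q : Fin 4) : ℤ :=
  match r, q with
  | 0,0 => -vOf t | 0,1 => vOf t | 0,2 => -uOf t | 0,3 => uOf t
  | 1,0 => vOf t | 1,1 => -vOf t | 1,2 => uOf t | 1,3 => -uOf t
  | 2,0 => -uOf t | 2,1 => uOf t | 2,2 => vOf t | 2,3 => -vOf t
  | 3,0 => uOf t | 3,1 => -uOf t | 3,2 => -vOf t | 3,3 => vOf t

lemma ddB_eq : ∀ (t : B4) (p q : Fin 2 × Fin 2),
    (∑ p' : Fin 2 × Fin 2, sg (b4get t p') * M3 (row4 p.1 p.2) (col16 q.1 q.2 p'.1 p'.2))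
      = dd2 t (row4 p.1 p.2) (row4 q.1 q.2) := by decide

lemma dd_eq (t0 t1 t2 : B4) (p q : Fin 2 × Fin 2) (s : Fin 3) :
    dd (g3of t0 t1 t2) p q s = dd2 (sel3 t0 t1 t2 s) (row4 p.1 p.2) (row4 q.1 q.2) :=
  ddB_eq (sel3 t0 t1 t2 s) p q

lemma sum4 (f : Fin 2 × Fin 2 → ℤ) :
    ∑ x : Fin 2 × Fin 2, f x = f (0,0) + f (0,1) + f (1,0) + f (1,1) := by
  rw [Fintype.sum_prod_type, Fin.sum_univ_two, Fin.sum_univ_two, Fin.sum_univ_two]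
  ring

lemma rv00 : row4 0 0 = 0 := by decide
lemma rv01 : row4 0 1 = 1 := by decide
lemma rv10 : row4 1 0 = 2 := by decide
lemma rv11 : row4 1 1 = 3 := by decide

def tri : Fin 3 → ℤ := ![-2, 0, 2]
lemma tri_u : ∀ t : B4, ∃ a : Fin 3, uOf t = tri a := by decide
lemma tri_v : ∀ t : B4, ∃ a : Fin 3, vOf t = tri a := by decide

set_option maxHeartbeats 2000000 in
set_option maxRecDepth 10000 in
lemma bridge (t0 t1 t2 : B4) (p1 p2 : Fin 2 × Fin 2) (hne : p1 ≠ p2) :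
    (∑ p ∈ Finset.univ \ {p1, p2}, ∑ q : Fin 2 × Fin 2, max3 (dd (g3of t0 t1 t2) p q)) +
    (∑ q : Fin 2 × Fin 2,
        max3 (fun s => dd (g3of t0 t1 t2) p1 q s + dd (g3of t0 t1 t2) p2 q s)) ≤ 28 := by
  rw [Finset.sum_sdiff_eq_sub (Finset.subset_univ _), Finset.sum_pair hne]
  simp only [sum4, max3, dd_eq, sel3]
  obtain ⟨a0, ha0⟩ := tri_u t0
  obtain ⟨b0, hb0⟩ := tri_v t0
  obtain ⟨a1, ha1⟩ := tri_u t1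
  obtain ⟨b1, hb1⟩ := tri_v t1
  obtain ⟨a2, ha2⟩ := tri_u t2
  obtain ⟨b2, hb2⟩ := tri_v t2
  fin_cases p1 <;> fin_cases p2 <;>
    first
      | exact absurd rfl hne
      | (simp only [Fin.mk_zero, Fin.mk_one, rv00, rv01, rv10, rv11, dd2,
           ha0, hb0, ha1, hb1, ha2, hb2]
         clear ha0 hb0 ha1 hb1 ha2 hb2 hne t0 t1 t2
         revert a0 b0 a1 b1 a2 b2
         decide)

lemma sum_rw (g1 : Fin 2 × Fin 2 → Fin 3) (g2 : Fin 3 → Fin 2 × Fin 2 → Fin 3)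
    (g3 : Fin 3 → Fin 2 × Fin 2 → ℤ) :
    ∑ x : Bits6, output3trit g1 g2 g3 x * T3 x
      = ∑ p : Fin 2 × Fin 2, ∑ q : Fin 2 × Fin 2, dd g3 p q (g2 (g1 p) q) := by
  simp [Fintype.sum_prod_type, output3trit, T3, dd]

lemma g3_decomp (g3 : Fin 3 → Fin 2 × Fin 2 → ℤ) (h : ∀ s p, g3 s p = -1 ∨ g3 s p = 1) :
    ∃ t0 t1 t2 : B4, g3 = g3of t0 t1 t2 := by
  refine ⟨(decide (g3 0 (0,0) = 1), decide (g3 0 (0,1) = 1), decide (g3 0 (1,0) = 1),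
            decide (g3 0 (1,1) = 1)),
          (decide (g3 1 (0,0) = 1), decide (g3 1 (0,1) = 1), decide (g3 1 (1,0) = 1),
            decide (g3 1 (1,1) = 1)),
          (decide (g3 2 (0,0) = 1), decide (g3 2 (0,1) = 1), decide (g3 2 (1,0) = 1),
            decide (g3 2 (1,1) = 1)), ?_⟩
  funext s p
  rcases h s p with hh | hh <;> fin_cases s <;> fin_cases p <;>
    simp_all [g3of, sel3, b4get, sg]

def w1 : Fin 2 × Fin 2 → Fin 3 := fun p => ![0,1,0,2] (row4 p.1 p.2)
def w2 : Fin 3 → Fin 2 × Fin 2 → Fin 3 := fun a q => ![![2,0,0,1],![0,1,1,2],![1,2,1,0]] a (row4 q.1 q.2)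
def w3 : Fin 3 → Fin 2 × Fin 2 → ℤ := fun s p => ![![1,1,1,-1],![1,-1,-1,1],![-1,1,-1,1]] s (row4 p.1 p.2)

lemma wsum : ∑ x : Bits6, output3trit w1 w2 w3 x * T3 x = 28 := by decide

lemma upper (g1 : Fin 2 × Fin 2 → Fin 3) (g2 : Fin 3 → Fin 2 × Fin 2 → Fin 3)
    (t0 t1 t2 : B4) :
    ∑ x : Bits6, output3trit g1 g2 (g3of t0 t1 t2) x * T3 x ≤ 28 := by
  rw [sum_rw]
  obtain ⟨p1, p2, hne, heq⟩ := Fintype.exists_ne_map_eq_of_card_lt g1 (by simp)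
  set G := g3of t0 t1 t2 with hG
  calc ∑ p : Fin 2 × Fin 2, ∑ q : Fin 2 × Fin 2, dd G p q (g2 (g1 p) q)
      = (∑ p ∈ Finset.univ \ {p1,p2}, ∑ q : Fin 2 × Fin 2, dd G p q (g2 (g1 p) q))
        + ((∑ q : Fin 2 × Fin 2, dd G p1 q (g2 (g1 p1) q))
           + ∑ q : Fin 2 × Fin 2, dd G p2 q (g2 (g1 p2) q)) := by
        rw [← Finset.sum_sdiff (Finset.subset_univ {p1,p2}), Finset.sum_pair hne]
    _ ≤ (∑ p ∈ Finset.univ \ {p1,p2}, ∑ q : Fin 2 × Fin 2, max3 (dd G p q))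
        + (∑ q : Fin 2 × Fin 2, max3 (fun s => dd G p1 q s + dd G p2 q s)) := by
        apply add_le_add
        · exact Finset.sum_le_sum fun p _ => Finset.sum_le_sum fun q _ => le_max3 _ _
        · rw [← Finset.sum_add_distrib]
          refine Finset.sum_le_sum fun q _ => ?_
          rw [heq]
          exact le_max3 (fun s => dd G p1 q s + dd G p2 q s) _
    _ ≤ 28 := bridge t0 t1 t2 p1 p2 hne

/-- the maximum correlation `(1/64) · Σ_x O(x)·T3(x)` over all three-module
one-trit classical sequential processors equals `7/16 = 0.4375`. -/
theorem stmt9 :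
    IsGreatest {c : ℚ | ∃ (g1 : Fin 2 × Fin 2 → Fin 3) (g2 : Fin 3 → Fin 2 × Fin 2 → Fin 3)
        (g3 : Fin 3 → Fin 2 × Fin 2 → ℤ),
      (∀ s p, g3 s p = -1 ∨ g3 s p = 1) ∧
      c = (1 / 64 : ℚ) * ∑ x : Bits6, ((output3trit g1 g2 g3 x * T3 x : ℤ) : ℚ)}
      (7 / 16) := by
  constructor
  · refine ⟨w1, w2, w3, by decide, ?_⟩
    rw [← Int.cast_sum, wsum]
    norm_num
  · rintro c ⟨g1, g2, g3, hg3, rfl⟩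
    obtain ⟨t0, t1, t2, rfl⟩ := g3_decomp g3 hg3
    have key := upper g1 g2 t0 t1 t2
    rw [← Int.cast_sum]
    have h2 : ((∑ x : Bits6, output3trit g1 g2 (g3of t0 t1 t2) x * T3 x : ℤ) : ℚ) ≤ 28 := by
      exact_mod_cast key
    linarith
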